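/- Let 𝒮 and 𝒜 be finite nonempty types, n ≥ 1, and let (s_i, a_i, r_i) ∈ 𝒮 × 𝒜 × ℝ for i ∈ Fin n be data. Let n(s) := #{i : s_i = s} and n(s, a) := #{i : s_i = s, a_i = a}, and assume n(s, a) > 0 for every s with n(s) > 0 and every a ∈ 𝒜. Set π̂(a|s) = n(s, a)/n(s) and r̂(s, a) = (∑_{i : s_i = s, a_i = a} r_i) / n(s, a), and let π_e : 𝒜 → ℝ be any function. Then (1/n)·∑_{i} (π_e(a_i)/π̂(a_i|s_i))·r_i = (1/n)·∑_{i} [ ∑_{a ∈ 𝒜} π_e(a)·r̂(s_i, a) + (π_e(a_i)/π̂(a_i|s_i))·(r_i − r̂(s_i, a_i)) ], and moreover ∑_{i} (π_e(a_i)/π̂(a_i|s_i))·(r_i − r̂(s_i, a_i)) = 0, so the left-hand side equals (1/n)·∑_{i} ∑_{a ∈ 𝒜} π_e(a)·r̂(s_i, a). -/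

import Mathlib

open Finset

lemma fiber2 {𝒮 𝒜 : Type*} [Fintype 𝒮] [Fintype 𝒜] [DecidableEq 𝒮] [DecidableEq 𝒜]
    {n : ℕ} (s : Fin n → 𝒮) (a : Fin n → 𝒜) (f : 𝒮 → 𝒜 → Fin n → ℝ) :
    ∑ i, f (s i) (a i) i =
      ∑ x, ∑ y, ∑ i ∈ Finset.univ.filter (fun i => s i = x ∧ a i = y), f x y i := by
  rw [show (∑ i, f (s i) (a i) i) = ∑ i ∈ Finset.univ.filter
      (fun i => (s i, a i) ∈ (Finset.univ : Finset (𝒮 × 𝒜))), f (s i) (a i) i by simp,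
    ← Finset.sum_fiberwise_eq_sum_filter]
  rw [Fintype.sum_prod_type]
  refine Finset.sum_congr rfl fun x _ => Finset.sum_congr rfl fun y _ => ?_
  refine Finset.sum_congr ?_ ?_
  · ext i; simp [Prod.ext_iff]
  · intro i hi
    simp only [mem_filter] at hi
    rw [hi.2.1, hi.2.2]

/-- The IS estimator with the context-dependent estimated behavior policy
`π̂(a|s) = n(s,a)/n(s)` equals the doubly robust estimator consisting of the direct-method
term averaging `∑ₐ π_e(a) r̂(sᵢ, a)` plus an augmentation term that vanishes identically. -/
theorem stmt_13 {𝒮 𝒜 : Type*} [Fintype 𝒮] [Nonempty 𝒮] [Fintype 𝒜] [Nonempty 𝒜]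
    [DecidableEq 𝒮] [DecidableEq 𝒜]
    (n : ℕ) (hn : 1 ≤ n) (s : Fin n → 𝒮) (a : Fin n → 𝒜) (r : Fin n → ℝ)
    (cntS : 𝒮 → ℕ) (hcntS : ∀ x, cntS x = (Finset.univ.filter fun i => s i = x).card)
    (cnt : 𝒮 → 𝒜 → ℕ)
    (hcnt : ∀ x y, cnt x y = (Finset.univ.filter fun i => s i = x ∧ a i = y).card)
    (hpos : ∀ x, 0 < cntS x → ∀ y, 0 < cnt x y)
    (πhat : 𝒮 → 𝒜 → ℝ) (hπhat : ∀ x y, πhat x y = (cnt x y : ℝ) / (cntS x : ℝ))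
    (rhat : 𝒮 → 𝒜 → ℝ)
    (hrhat : ∀ x y, rhat x y =
      (∑ i ∈ Finset.univ.filter (fun i => s i = x ∧ a i = y), r i) / (cnt x y : ℝ))
    (πe : 𝒜 → ℝ) :
    ((1 : ℝ) / n) * ∑ i, (πe (a i) / πhat (s i) (a i)) * r i =
        ((1 : ℝ) / n) * ∑ i, ((∑ y, πe y * rhat (s i) y) +
          (πe (a i) / πhat (s i) (a i)) * (r i - rhat (s i) (a i))) ∧
    (∑ i, (πe (a i) / πhat (s i) (a i)) * (r i - rhat (s i) (a i))) = 0 ∧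
    ((1 : ℝ) / n) * ∑ i, (πe (a i) / πhat (s i) (a i)) * r i =
      ((1 : ℝ) / n) * ∑ i, ∑ y, πe y * rhat (s i) y := by
  set T : 𝒮 → 𝒜 → Finset (Fin n) :=
    fun x y => Finset.univ.filter (fun i => s i = x ∧ a i = y) with hT
  -- cnt 0 implies empty fiber
  have hempty : ∀ x y, cnt x y = 0 → T x y = ∅ := fun x y h => by
    rwa [hcnt, Finset.card_eq_zero] at h
  have hsumN : ∀ x, ∑ y, cnt x y = cntS x := by
    intro x
    rw [hcntS,
      show ∑ y, cnt x y = ∑ y, (Finset.univ.filter (fun i => s i = x ∧ a i = y)).card from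
        Finset.sum_congr rfl fun y _ => hcnt x y,
      Finset.card_eq_sum_card_fiberwise (f := a)
        (t := (Finset.univ : Finset 𝒜)) (fun i _ => Finset.mem_univ _)]
    refine Finset.sum_congr rfl fun y _ => ?_
    congr 1
    rw [Finset.filter_filter]
  have hsum : ∀ x, ∑ y, (cnt x y : ℝ) = (cntS x : ℝ) := by
    intro x; rw [← hsumN x]; push_cast; ring
  -- part 2 : augmentation vanishes
  have part2 : (∑ i, (πe (a i) / πhat (s i) (a i)) * (r i - rhat (s i) (a i))) = 0 := by
    rw [fiber2 s a (fun x y i => (πe y / πhat x y) * (r i - rhat x y))]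
    refine Finset.sum_eq_zero fun x _ => Finset.sum_eq_zero fun y _ => ?_
    rcases Nat.eq_zero_or_pos (cnt x y) with h0 | hp
    · rw [show Finset.univ.filter (fun i => s i = x ∧ a i = y) = T x y from rfl,
        hempty x y h0, Finset.sum_empty]
    · have hne : (cnt x y : ℝ) ≠ 0 := by positivity
      rw [← Finset.mul_sum, Finset.sum_sub_distrib, Finset.sum_const, nsmul_eq_mul, ← hcnt, hrhat]
      field_simp
      simp
  -- key per-fiber identity
  have key : ∀ x y, (πe y / πhat x y) * (∑ i ∈ T x y, r i) =
      (cntS x : ℝ) * (πe y * rhat x y) := by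
    intro x y
    rcases Nat.eq_zero_or_pos (cntS x) with h0 | hp
    · have hc0 : cnt x y = 0 := by
        rw [hcnt]
        refine Nat.le_zero.mp ?_
        rw [hcntS] at h0
        calc (Finset.univ.filter fun i => s i = x ∧ a i = y).card
            ≤ (Finset.univ.filter fun i => s i = x).card := by
              refine Finset.card_le_card ?_
              intro i hi
              simp only [Finset.mem_filter] at hi ⊢
              exact ⟨hi.1, hi.2.1⟩
          _ = 0 := h0
      rw [hempty x y hc0, Finset.sum_empty]
      simp [h0]
    · have hcp := hpos x hp y
      have hcne : (cnt x y : ℝ) ≠ 0 := by positivity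
      have hsne : (cntS x : ℝ) ≠ 0 := by positivity
      rw [hπhat, hrhat]
      rw [show (∑ i ∈ Finset.univ.filter (fun i => s i = x ∧ a i = y), r i) = ∑ i ∈ T x y, r i
        from rfl]
      field_simp
  -- part 3
  have part3 : (∑ i, (πe (a i) / πhat (s i) (a i)) * r i) =
      ∑ i, ∑ y, πe y * rhat (s i) y := by
    rw [fiber2 s a (fun x y i => (πe y / πhat x y) * r i),
        fiber2 s a (fun x y i => ∑ y', πe y' * rhat x y')]
    refine Finset.sum_congr rfl fun x _ => ?_
    have hR : ∀ y : 𝒜, (∑ i ∈ Finset.univ.filter (fun i => s i = x ∧ a i = y),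
        ∑ y', πe y' * rhat x y') = (cnt x y : ℝ) * ∑ y', πe y' * rhat x y' := by
      intro y
      rw [Finset.sum_const, ← hcnt, nsmul_eq_mul]
    calc ∑ y, ∑ i ∈ Finset.univ.filter (fun i => s i = x ∧ a i = y), (πe y / πhat x y) * r i
        = ∑ y, (πe y / πhat x y) * ∑ i ∈ T x y, r i := by
          refine Finset.sum_congr rfl fun y _ => ?_
          rw [Finset.mul_sum]
      _ = ∑ y, (cntS x : ℝ) * (πe y * rhat x y) :=
          Finset.sum_congr rfl fun y _ => key x y
      _ = (cntS x : ℝ) * ∑ y, πe y * rhat x y := by rw [Finset.mul_sum]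
      _ = (∑ y, (cnt x y : ℝ)) * ∑ y', πe y' * rhat x y' := by rw [hsum]
      _ = ∑ y, (cnt x y : ℝ) * ∑ y', πe y' * rhat x y' := by rw [Finset.sum_mul]
      _ = _ := Finset.sum_congr rfl fun y _ => (hR y).symm
  refine ⟨?_, part2, by rw [part3]⟩
  rw [Finset.sum_add_distrib, part2, add_zero, part3]
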